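/- Let μ be a Borel probability measure on ℝ^d that is occasionally-α-dimensional, and suppose ν is a Bessel measure for μ. Then D_α(ν) < ∞, and consequently dim ν ≤ α. -/

import Mathlib

open MeasureTheory Filter Metric Complex Set
open scoped ENNReal NNReal Real Topology

noncomputable section

/-- Euclidean space `ℝ^d`. -/
abbrev Ed (d : ℕ) := EuclideanSpace ℝ (Fin d)

/-- The Fourier transform of the measure `f dμ`:
`(f dμ)^(t) = ∫ f(x) e^{-2πi t·x} dμ(x)`. -/
def ftm {d : ℕ} (μ : Measure (Ed d)) (f : Ed d → ℂ) (t : Ed d) : ℂ :=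
  ∫ x, f x * Complex.exp (-(2 * Real.pi * (inner ℝ t x : ℝ)) * Complex.I) ∂μ

/-- `ν` is a Bessel measure for `μ` with bound `B`:
`∫ |(f dμ)^(t)|² dν(t) ≤ B ‖f‖²_{L²(μ)}` for all `f ∈ L²(μ)`. -/
def IsBesselBound {d : ℕ} (μ ν : Measure (Ed d)) (B : ℝ) : Prop :=
  ∀ f : Ed d → ℂ, MemLp f 2 μ →
    ∫⁻ t, (‖ftm μ f t‖₊ : ℝ≥0∞) ^ 2 ∂ν ≤ ENNReal.ofReal B * ∫⁻ x, (‖f x‖₊ : ℝ≥0∞) ^ 2 ∂μ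

/-- `ν` is a frame measure for `μ` with bounds `A, B`:
`A ‖f‖²_{L²(μ)} ≤ ∫ |(f dμ)^(t)|² dν(t) ≤ B ‖f‖²_{L²(μ)}` for all `f ∈ L²(μ)`. -/
def IsFrameBounds {d : ℕ} (μ ν : Measure (Ed d)) (A B : ℝ) : Prop :=
  ∀ f : Ed d → ℂ, MemLp f 2 μ →
    ENNReal.ofReal A * ∫⁻ x, (‖f x‖₊ : ℝ≥0∞) ^ 2 ∂μ ≤ ∫⁻ t, (‖ftm μ f t‖₊ : ℝ≥0∞) ^ 2 ∂ν ∧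
    ∫⁻ t, (‖ftm μ f t‖₊ : ℝ≥0∞) ^ 2 ∂ν ≤ ENNReal.ofReal B * ∫⁻ x, (‖f x‖₊ : ℝ≥0∞) ^ 2 ∂μ

/-- The cube `x + R·Q` where `Q = [0,1)^d`. -/
def cube {d : ℕ} (x : Ed d) (R : ℝ) : Set (Ed d) := {y | ∀ i, y i ∈ Set.Ico (x i) (x i + R)}

/-- The `α`-upper Beurling density `D_α(ν) = limsup_{R→∞} sup_x ν(x+RQ)/R^α`. -/
def beurlingDensity {d : ℕ} (ν : Measure (Ed d)) (α : ℝ) : ℝ≥0∞ :=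
  limsup (fun R : ℝ => ⨆ x : Ed d, ν (cube x R) / ENNReal.ofReal (R ^ α)) atTop

/-- The upper Beurling dimension `dim ν = sup {α ≥ 0 : D_α(ν) = ∞}`. -/
def beurlingDim {d : ℕ} (ν : Measure (Ed d)) : ℝ≥0∞ :=
  ⨆ (α : ℝ) (_ : 0 ≤ α) (_ : beurlingDensity ν α = ∞), ENNReal.ofReal α

/-- The `d`-lower Beurling density `D⁻(ν) = liminf_{R→∞} inf_x ν(x+RQ)/R^d`. -/
def lowerBeurlingDensity {d : ℕ} (ν : Measure (Ed d)) : ℝ≥0∞ :=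
  liminf (fun R : ℝ => ⨅ x : Ed d, ν (cube x R) / ENNReal.ofReal (R ^ (d : ℝ))) atTop


lemma exp_I_sub' (a b : ℝ) (h : |a - b| ≤ 1) : ‖Complex.exp (a * Complex.I) - Complex.exp (b * Complex.I)‖ ≤ 2 * |a - b| := by
  have e1 : Complex.exp (a*Complex.I) - Complex.exp (b*Complex.I) = Complex.exp (b*Complex.I) * (Complex.exp (((a-b:ℝ):ℂ)*Complex.I) - 1) := by
    rw [mul_sub, ← Complex.exp_add]; push_cast; ring_nf
  have hab : ‖(((a-b:ℝ):ℂ) * Complex.I)‖ = |a - b| := by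
    rw [norm_mul, Complex.norm_I, mul_one, Complex.norm_real, Real.norm_eq_abs]
  rw [e1, norm_mul, Complex.norm_exp]
  simp only [mul_I_re, ofReal_im, neg_zero, Real.exp_zero, one_mul]
  have h2 := Complex.norm_exp_sub_one_le (x := ((a-b:ℝ) : ℂ) * Complex.I) (by rw [hab]; exact h)
  rw [hab] at h2
  exact h2

lemma norm_setIntegral_ge' {d : ℕ} (μ : Measure (Ed d)) [IsFiniteMeasure μ] (S : Set (Ed d))
    (hS : MeasurableSet S) (x₀ : Ed d) (hx₀ : x₀ ∈ S) (s : Ed d)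
    (hsmall : ∀ y ∈ S, |(-(2*Real.pi*(inner ℝ s y : ℝ))) - (-(2*Real.pi*(inner ℝ s x₀ : ℝ)))| ≤ 4⁻¹) :
    (μ S).toReal / 2 ≤ ‖∫ x in S, Complex.exp (((-(2*Real.pi*(inner ℝ s x : ℝ)) : ℝ) : ℂ) * Complex.I) ∂μ‖ := by
  set g : Ed d → ℂ := fun x => Complex.exp ((-(2*Real.pi*(inner ℝ s x : ℝ)) : ℝ) * Complex.I) with hg
  set c : ℂ := Complex.exp ((-(2*Real.pi*(inner ℝ s x₀ : ℝ)) : ℝ) * Complex.I) with hc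
  have hgc : Continuous g := by
    apply Complex.continuous_exp.comp
    exact (Complex.continuous_ofReal.comp (continuous_const.mul (Continuous.inner continuous_const continuous_id)).neg).mul continuous_const
  have hnorm : ∀ y ∈ S, ‖g y - c‖ ≤ 2⁻¹ := by
    intro y hy
    have := exp_I_sub' (-(2*Real.pi*(inner ℝ s y : ℝ))) (-(2*Real.pi*(inner ℝ s x₀ : ℝ)))
      (le_trans (hsmall y hy) (by norm_num))
    refine le_trans this ?_
    have := hsmall y hy
    linarith
  have hgi : IntegrableOn g S μ := by
    refine Integrable.mono' (integrable_const 1) hgc.aestronglyMeasurable ?_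
    filter_upwards with x
    rw [hg]
    simp [Complex.norm_exp]
  have hci : IntegrableOn (fun _ => c) S μ := integrable_const c
  have h1 : ∫ x in S, g x ∂μ = (μ S).toReal • c + ∫ x in S, (g x - c) ∂μ := by
    rw [integral_sub hgi hci, setIntegral_const, measureReal_def]; ring
  have hcnorm : ‖c‖ = 1 := by rw [hc]; simp [Complex.norm_exp]
  have h2 : ‖∫ x in S, (g x - c) ∂μ‖ ≤ (μ S).toReal / 2 := by
    refine le_trans (norm_integral_le_integral_norm _) ?_
    have : ∫ x in S, ‖g x - c‖ ∂μ ≤ ∫ _ in S, (2⁻¹ : ℝ) ∂μ := by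
      exact setIntegral_mono_on (hgi.sub hci).norm (integrable_const _) hS hnorm
    refine le_trans this ?_
    rw [setIntegral_const]
    simp [smul_eq_mul]
    ring_nf
    exact le_refl _
  have h3 : ‖(μ S).toReal • c‖ = (μ S).toReal := by
    rw [norm_smul, hcnorm, mul_one, Real.norm_of_nonneg ENNReal.toReal_nonneg]
  calc (μ S).toReal / 2 = (μ S).toReal - (μ S).toReal/2 := by ring
    _ ≤ ‖(μ S).toReal • c‖ - ‖∫ x in S, (g x - c) ∂μ‖ := by rw [h3]; linarith
    _ ≤ ‖(μ S).toReal • c + ∫ x in S, (g x - c) ∂μ‖ := by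
        have := norm_sub_le ((μ S).toReal • c + ∫ x in S, (g x - c) ∂μ) (∫ x in S, (g x - c) ∂μ)
        simp only [add_sub_cancel_right] at this
        linarith
    _ = ‖∫ x in S, g x ∂μ‖ := by rw [← h1]

lemma ftm_indicator' {d : ℕ} (μ : Measure (Ed d)) (S : Set (Ed d)) (hS : MeasurableSet S)
    (t₀ t : Ed d) :
    ftm μ (S.indicator fun y => Complex.exp ((2*Real.pi*(inner ℝ t₀ y : ℝ) : ℝ) * Complex.I)) t
      = ∫ x in S, Complex.exp (-(2*Real.pi*((inner ℝ (t - t₀) x : ℝ)) : ℝ) * Complex.I) ∂μ := by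
  unfold ftm
  rw [← integral_indicator hS]
  congr 1; ext x
  by_cases hx : x ∈ S
  · simp only [indicator_of_mem hx, ← Complex.exp_add]
    congr 1
    rw [inner_sub_left]
    push_cast
    ring
  · simp [indicator_of_notMem hx]

lemma ball_bound' {d : ℕ} (μ ν : Measure (Ed d)) [IsProbabilityMeasure μ] (B : ℝ) (hB : 0 < B)
    (hbes : IsBesselBound μ ν B) (S : Set (Ed d)) (hS : MeasurableSet S)
    (hSpos : 0 < μ S) (hDpos : 0 < Metric.diam S) (t₀ : Ed d) (r : ℝ) (hr : 0 ≤ r)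
    (hrD : r * Metric.diam S ≤ 32⁻¹) :
    ν (closedBall t₀ r) ≤ ENNReal.ofReal (4 * B / (μ S).toReal) := by
  set m := (μ S).toReal with hm
  have hμfin : μ S ≠ ∞ := (measure_lt_top μ S).ne
  have hmpos : 0 < m := ENNReal.toReal_pos hSpos.ne' hμfin
  obtain ⟨x₀, hx₀⟩ := nonempty_of_measure_ne_zero hSpos.ne'
  have hbdd : Bornology.IsBounded S := by
    by_contra h
    rw [Metric.diam, Metric.ediam_of_unbounded h] at hDpos
    simp at hDpos
  set f : Ed d → ℂ := S.indicator fun y => Complex.exp ((2*Real.pi*(inner ℝ t₀ y : ℝ) : ℝ) * Complex.I) with hf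
  have hfmeas : AEStronglyMeasurable f μ := by
    apply AEStronglyMeasurable.indicator _ hS
    apply Continuous.aestronglyMeasurable
    exact Complex.continuous_exp.comp
      ((Complex.continuous_ofReal.comp (continuous_const.mul (Continuous.inner continuous_const continuous_id))).mul continuous_const)
  have hfbd : MemLp f 2 μ := by
    refine MemLp.of_bound hfmeas 1 ?_
    filter_upwards with x
    rw [hf]
    by_cases hx : x ∈ S
    · simp [indicator_of_mem hx, Complex.norm_exp]
    · simp [indicator_of_notMem hx]
  have hRHS : ∫⁻ x, (‖f x‖₊ : ℝ≥0∞) ^ 2 ∂μ = μ S := by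
    have : (fun x => (‖f x‖₊ : ℝ≥0∞) ^ 2) = S.indicator (fun _ => 1) := by
      ext x
      by_cases hx : x ∈ S
      · simp only [hf, indicator_of_mem hx, indicator_of_mem (a := x) hx (fun _ => (1:ℝ≥0∞))]
        have h1 : ‖Complex.exp ((2*Real.pi*(inner ℝ t₀ x : ℝ) : ℝ) * Complex.I)‖ = 1 := by
          simp [Complex.norm_exp]
        rw [← enorm_eq_nnnorm, ← ofReal_norm, h1]
        simp
      · simp [hf, indicator_of_notMem hx]
    rw [this]
    exact lintegral_indicator_one hS
  have hlow : ∀ t ∈ closedBall t₀ r, ENNReal.ofReal (m/2) ≤ (‖ftm μ f t‖₊ : ℝ≥0∞) := by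
    intro t ht
    have key : m / 2 ≤ ‖ftm μ f t‖ := by
      rw [ftm_indicator' μ S hS t₀ t]
      have := norm_setIntegral_ge' μ S hS x₀ hx₀ (t - t₀) ?_
      · convert this using 3 with x
        push_cast
        ring
      · intro y hy
        have h1 : |inner (𝕜 := ℝ) (t - t₀) (y - x₀)| ≤ ‖t - t₀‖ * ‖y - x₀‖ := abs_real_inner_le_norm _ _
        have h2 : ‖t - t₀‖ ≤ r := by rwa [← dist_eq_norm, ← Metric.mem_closedBall]
        have h3 : ‖y - x₀‖ ≤ Metric.diam S := by
          rw [← dist_eq_norm]; exact Metric.dist_le_diam_of_mem hbdd hy hx₀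
        have h4 : -(2*Real.pi*(inner ℝ (t-t₀) y : ℝ)) - -(2*Real.pi*(inner ℝ (t-t₀) x₀ : ℝ))
            = -(2*Real.pi) * (inner (𝕜 := ℝ) (t - t₀) (y - x₀)) := by
          rw [inner_sub_right]; ring
        rw [h4, abs_mul]
        have h5 : ‖t - t₀‖ * ‖y - x₀‖ ≤ r * Metric.diam S := by
          apply mul_le_mul h2 h3 (norm_nonneg _) hr
        have hπ : |(-(2*Real.pi))| = 2*Real.pi := by
          rw [abs_neg, abs_of_pos]; positivity
        rw [hπ]
        calc 2*Real.pi * |inner (𝕜 := ℝ) (t - t₀) (y - x₀)| ≤ 2*Real.pi * (32⁻¹) := by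
              apply mul_le_mul_of_nonneg_left _ (by positivity)
              exact le_trans h1 (le_trans h5 hrD)
          _ ≤ 4⁻¹ := by nlinarith [Real.pi_lt_d2]
    calc ENNReal.ofReal (m/2) ≤ ENNReal.ofReal ‖ftm μ f t‖ := ENNReal.ofReal_le_ofReal key
      _ = (‖ftm μ f t‖₊ : ℝ≥0∞) := ofReal_norm _
  have hLHS : ENNReal.ofReal (m/2) ^ 2 * ν (closedBall t₀ r) ≤ ∫⁻ t, (‖ftm μ f t‖₊ : ℝ≥0∞) ^ 2 ∂ν := by
    have : ENNReal.ofReal (m/2) ^ 2 * ν (closedBall t₀ r)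
        = ∫⁻ t, (closedBall t₀ r).indicator (fun _ => ENNReal.ofReal (m/2) ^ 2) t ∂ν := by
      rw [lintegral_indicator measurableSet_closedBall, setLIntegral_const]
    rw [this]
    apply lintegral_mono
    intro t
    by_cases ht : t ∈ closedBall t₀ r
    · rw [indicator_of_mem ht]
      exact pow_le_pow_left' (hlow t ht) 2
    · simp [indicator_of_notMem ht]
  have hkey := le_trans hLHS (hbes f hfbd)
  rw [hRHS] at hkey
  have hμS : μ S = ENNReal.ofReal m := (ENNReal.ofReal_toReal hμfin).symm
  rw [hμS] at hkey
  have ha : ENNReal.ofReal (m/2)^2 = ENNReal.ofReal (m^2/4) := by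
    rw [← ENNReal.ofReal_pow (by positivity)]
    ring_nf
  rw [ha, mul_comm] at hkey
  have hane : ENNReal.ofReal (m^2/4) ≠ 0 := by
    simp only [ne_eq, ENNReal.ofReal_eq_zero, not_le]
    positivity
  have hdiv : ν (closedBall t₀ r) ≤ (ENNReal.ofReal B * ENNReal.ofReal m) / ENNReal.ofReal (m^2/4) :=
    (ENNReal.le_div_iff_mul_le (Or.inl hane) (Or.inl ENNReal.ofReal_ne_top)).mpr hkey
  refine le_trans hdiv (le_of_eq ?_)
  rw [← ENNReal.ofReal_mul hB.le, ← ENNReal.ofReal_div_of_pos (by positivity)]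
  congr 1
  field_simp

lemma cube_subset_closedBall' {d : ℕ} (x : Ed d) (R : ℝ) (hR : 0 ≤ R) :
    cube x R ⊆ closedBall x (R * (Real.sqrt d + 1)) := by
  intro y hy
  rw [mem_closedBall, EuclideanSpace.dist_eq]
  have h1 : ∀ i, dist (y i) (x i) ^ 2 ≤ R ^ 2 := by
    intro i
    obtain ⟨h2, h3⟩ := hy i
    rw [Real.dist_eq, _root_.sq_abs]
    nlinarith
  calc Real.sqrt (∑ i, dist (y i) (x i) ^ 2) ≤ Real.sqrt (∑ _i : Fin d, R ^ 2) := by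
        apply Real.sqrt_le_sqrt
        exact Finset.sum_le_sum fun i _ => h1 i
    _ = Real.sqrt ((d : ℝ) * R ^ 2) := by rw [Finset.sum_const]; simp [mul_comm]
    _ = Real.sqrt d * R := by
        rw [Real.sqrt_mul (Nat.cast_nonneg d), Real.sqrt_sq hR]
    _ ≤ R * (Real.sqrt d + 1) := by nlinarith [Real.sqrt_nonneg (d:ℝ)]


/-- If `μ` is an occasionally-`α`-dimensional probability measure (there are Borel sets `E_n`
with `diam E_n` strictly decreasing to `0`, bounded ratios, and
`c₁ diam(E_n)^α ≤ μ(E_n) ≤ c₂ diam(E_n)^α`), and `ν` is a Bessel measure for `μ`, then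
`D_α(ν) < ∞` and hence `dim ν ≤ α`. -/
theorem stmt14 {d : ℕ} (μ ν : Measure (Ed d)) [IsProbabilityMeasure μ] (α : ℝ) (hα : 0 ≤ α)
    (E : ℕ → Set (Ed d)) (hEm : ∀ n, MeasurableSet (E n))
    (hdec : StrictAnti fun n => Metric.diam (E n))
    (hlim : Tendsto (fun n => Metric.diam (E n)) atTop (nhds 0))
    (M : ℝ) (hM : ∀ n, Metric.diam (E n) ≤ M * Metric.diam (E (n + 1)))
    (c₁ c₂ : ℝ) (hc₁ : 0 < c₁) (hc₂ : 0 < c₂)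
    (hlo : ∀ n, ENNReal.ofReal (c₁ * Metric.diam (E n) ^ α) ≤ μ (E n))
    (hhi : ∀ n, μ (E n) ≤ ENNReal.ofReal (c₂ * Metric.diam (E n) ^ α))
    (hbes : ∃ B > (0 : ℝ), IsBesselBound μ ν B) :
    beurlingDensity ν α ≠ ∞ ∧ beurlingDim ν ≤ ENNReal.ofReal α := by
  classical
  obtain ⟨B, hB, hbes⟩ := hbes
  set D : ℕ → ℝ := fun n => Metric.diam (E n) with hD
  have hDpos : ∀ n, 0 < D n := by
    intro n
    have h1 : D (n+1) < D n := hdec (Nat.lt_succ_self n)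
    have h2 : 0 ≤ D (n+1) := Metric.diam_nonneg
    linarith
  have hM1 : 1 < M := by
    have h1 := hM 0
    have h2 : D 1 < D 0 := hdec (Nat.lt_succ_self 0)
    have h3 := hDpos 1
    nlinarith
  set r : ℕ → ℝ := fun n => (32 * D n)⁻¹ with hr
  have hrpos : ∀ n, 0 < r n := fun n => by
    have := hDpos n; rw [hr]; positivity
  have hrtend : Tendsto r atTop atTop := by
    have h0 : Tendsto D atTop (nhdsWithin 0 (Set.Ioi 0)) := by
      apply tendsto_nhdsWithin_of_tendsto_nhds_of_eventually_within _ hlim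
      exact Eventually.of_forall fun n => hDpos n
    have h1 : Tendsto (fun n => (D n)⁻¹) atTop atTop := tendsto_inv_nhdsGT_zero.comp h0
    have h2 : Tendsto (fun n => (D n)⁻¹ * (32:ℝ)⁻¹) atTop atTop := h1.atTop_mul_const (by norm_num)
    refine h2.congr fun n => ?_
    show (D n)⁻¹ * 32⁻¹ = (32 * D n)⁻¹
    rw [mul_inv]
    ring
  have hsel : ∀ ρ : ℝ, r 0 ≤ ρ → ∃ n, ρ ≤ r n ∧ r n ≤ M * ρ := by
    intro ρ hρ
    have hρ0 : 0 < ρ := lt_of_lt_of_le (hrpos 0) hρ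
    have hex : ∃ n, ρ ≤ r n := (hrtend.eventually_ge_atTop ρ).exists
    refine ⟨Nat.find hex, Nat.find_spec hex, ?_⟩
    cases hN : Nat.find hex with
    | zero =>
      calc r 0 ≤ ρ := hρ
        _ ≤ M * ρ := by nlinarith
    | succ k =>
      have hk : ¬ ρ ≤ r k := Nat.find_min hex (hN ▸ Nat.lt_succ_self k)
      push_neg at hk
      have hstep : r (k+1) ≤ M * r k := by
        show (32 * D (k+1))⁻¹ ≤ M * (32 * D k)⁻¹
        have hMk := hM k
        have h1 := hDpos k
        have h2 := hDpos (k+1)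
        rw [inv_le_iff_one_le_mul₀ (by positivity)]
        have : M * (32 * D k)⁻¹ * (32 * D (k+1)) = M * D (k+1) / D k := by
          field_simp
        rw [this, le_div_iff₀ h1]
        simpa [hD] using hMk
      calc r (k+1) ≤ M * r k := hstep
        _ ≤ M * ρ := by nlinarith
  set C : ℝ := (4*B/c₁) * (32*M*(Real.sqrt d+1))^α with hC
  have hsd : (0:ℝ) < Real.sqrt d + 1 := by positivity
  have hCpos : 0 < C := by
    rw [hC]
    have h1 : (0:ℝ) < 32*M*(Real.sqrt d+1) := by positivity
    have := Real.rpow_pos_of_pos h1 α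
    positivity
  have hmain : ∀ R : ℝ, max 1 (r 0) ≤ R → ∀ x : Ed d, ν (cube x R) ≤ ENNReal.ofReal (C * R ^ α) := by
    intro R hR x
    have hR1 : 1 ≤ R := le_trans (le_max_left _ _) hR
    have hR0 : 0 < R := lt_of_lt_of_le one_pos hR1
    set ρ := R * (Real.sqrt d + 1) with hρdef
    have hρR : R ≤ ρ := by nlinarith [Real.sqrt_nonneg (d:ℝ)]
    have hρ0 : r 0 ≤ ρ := le_trans (le_trans (le_max_right _ _) hR) hρR
    obtain ⟨n, hn1, hn2⟩ := hsel ρ hρ0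
    have hsub : cube x R ⊆ closedBall x (r n) :=
      (cube_subset_closedBall' x R hR0.le).trans (closedBall_subset_closedBall hn1)
    have hEpos : 0 < μ (E n) := by
      refine lt_of_lt_of_le ?_ (hlo n)
      rw [ENNReal.ofReal_pos]
      have h1 := hDpos n
      have := Real.rpow_pos_of_pos h1 α
      positivity
    have hrD : r n * D n ≤ 32⁻¹ := by
      show (32 * D n)⁻¹ * D n ≤ 32⁻¹
      have := hDpos n
      rw [mul_inv, mul_assoc, inv_mul_cancel₀ this.ne', mul_one]
    have hball := ball_bound' μ ν B hB hbes (E n) (hEm n) hEpos (hDpos n) x (r n) (hrpos n).le hrD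
    calc ν (cube x R) ≤ ν (closedBall x (r n)) := measure_mono hsub
      _ ≤ ENNReal.ofReal (4*B/(μ (E n)).toReal) := hball
      _ ≤ ENNReal.ofReal (C * R ^ α) := by
          apply ENNReal.ofReal_le_ofReal
          have hDn := hDpos n
          have hDα : 0 < D n ^ α := Real.rpow_pos_of_pos hDn α
          have hmlo : c₁ * D n ^ α ≤ (μ (E n)).toReal := by
            have h2 := ENNReal.toReal_mono (measure_ne_top μ _) (hlo n)
            rwa [ENNReal.toReal_ofReal (by positivity)] at h2
          have hmpos : 0 < c₁ * D n ^ α := by positivity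
          have step1 : 4*B/(μ (E n)).toReal ≤ 4*B/(c₁ * D n ^ α) :=
            div_le_div_of_nonneg_left (by positivity) hmpos hmlo
          refine le_trans step1 ?_
          have hDe : D n = (32 * r n)⁻¹ := by
            show D n = (32 * (32 * D n)⁻¹)⁻¹
            have := hDpos n
            have := hDpos n
            field_simp
          have e1 : 4*B/(c₁ * D n ^ α) = (4*B/c₁) * (32 * r n)^α := by
            rw [hDe, Real.inv_rpow (by positivity : (0:ℝ) ≤ 32 * r n)]
            have hx0 : (0:ℝ) < (32 * r n)^α := Real.rpow_pos_of_pos (by positivity) α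
            field_simp
          rw [e1]
          have h2 : (32 * r n)^α ≤ (32*M*(Real.sqrt d+1) * R)^α := by
            apply Real.rpow_le_rpow (by positivity) _ hα
            calc 32 * r n ≤ 32 * (M * ρ) := by
                  have h32 : (0:ℝ) < 32 := by norm_num
                  nlinarith
              _ = 32*M*(Real.sqrt d+1)*R := by rw [hρdef]; ring
          calc (4*B/c₁) * (32*r n)^α ≤ (4*B/c₁) * ((32*M*(Real.sqrt d+1)*R)^α) := by
                apply mul_le_mul_of_nonneg_left h2 (by positivity)
            _ = C * R^α := by
                rw [Real.mul_rpow (by positivity) hR0.le, hC]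
                ring
  have hdens : ∀ γ : ℝ, α ≤ γ → beurlingDensity ν γ ≤ ENNReal.ofReal C := by
    intro γ hγ
    refine limsup_le_of_le (by isBoundedDefault) ?_
    filter_upwards [eventually_ge_atTop (max 1 (r 0))] with R hR
    apply iSup_le
    intro x
    have h1 := hmain R hR x
    have hR1 : (1:ℝ) ≤ R := le_trans (le_max_left _ _) hR
    have hR0 : 0 < R := lt_of_lt_of_le one_pos hR1
    have hRγ : 0 < R ^ γ := Real.rpow_pos_of_pos hR0 γ
    rw [ENNReal.div_le_iff_le_mul (Or.inl (by simp only [ne_eq, ENNReal.ofReal_eq_zero, not_le]; exact hRγ)) (Or.inl ENNReal.ofReal_ne_top)]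
    calc ν (cube x R) ≤ ENNReal.ofReal (C * R ^ α) := h1
      _ ≤ ENNReal.ofReal (C * R ^ γ) := by
          apply ENNReal.ofReal_le_ofReal
          apply mul_le_mul_of_nonneg_left _ hCpos.le
          exact Real.rpow_le_rpow_of_exponent_le hR1 hγ
      _ = ENNReal.ofReal C * ENNReal.ofReal (R ^ γ) := ENNReal.ofReal_mul hCpos.le
  constructor
  · exact ne_top_of_le_ne_top ENNReal.ofReal_ne_top (hdens α le_rfl)
  · rw [beurlingDim]
    apply iSup_le
    intro β
    apply iSup_le
    intro hβ
    apply iSup_le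
    intro hDβ
    rcases le_or_gt β α with h | h
    · exact ENNReal.ofReal_le_ofReal h
    · exact absurd hDβ (ne_top_of_le_ne_top ENNReal.ofReal_ne_top (hdens β h.le))
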